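/- In a digraph, if two directed cycles C and C' have no common arc (though they may contain opposite arcs), then the set of arcs Δ = {a ∈ C : −a ∉ C'} ∪ {a ∈ C' : −a ∉ C}, where −a denotes the arc opposite to a, can be written as a disjoint union of directed cycles. -/

import Mathlib

namespace SubgraphsVsOrientations

variable {V : Type*}

def IsCycList (l : List (V × V)) : Prop :=
  ∃ h : l ≠ [],
    l.Chain' (fun a b => a.2 = b.1) ∧
    (l.getLast h).2 = (l.head h).1 ∧
    (l.map Prod.fst).Nodup

def IsCycleSet (C : Set (V × V)) : Prop :=
  ∃ l : List (V × V), IsCycList l ∧ C = {a | a ∈ l}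

/-- Balance condition: every vertex has equal out- and in-degree. -/
def Bal (S : Set (V × V)) : Prop :=
  ∀ v, {a ∈ S | a.1 = v}.ncard = {a ∈ S | a.2 = v}.ncard

lemma map_snd_eq_aux : ∀ (l : List (V × V)) (h : l ≠ []),
    l.Chain' (fun a b => a.2 = b.1) →
    l.map Prod.snd = l.tail.map Prod.fst ++ [(l.getLast h).2]
  | [x], _, _ => by simp
  | x :: y :: t, _, hc => by
    unfold List.Chain' at hc
    rw [List.isChain_cons_cons] at hc
    have ih := map_snd_eq_aux (y :: t) (by simp) hc.2
    simp only [List.map_cons, List.tail_cons] at ih ⊢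
    rw [List.getLast_cons (by simp : (y :: t) ≠ [])]
    rw [ih, hc.1]
    simp

lemma map_snd_rotate {l : List (V × V)} (hl : IsCycList l) :
    l.map Prod.snd = (l.map Prod.fst).rotate 1 := by
  obtain ⟨h, hc, hcl, _⟩ := hl
  cases l with
  | nil => simp at h
  | cons x t =>
    have := map_snd_eq_aux (x :: t) h hc
    simp only [List.tail_cons] at this
    rw [this, hcl]
    rw [List.map_cons, List.rotate_cons_succ, List.rotate_zero]
    simp [List.head_cons]

lemma cyc_bal {l : List (V × V)} (hl : IsCycList l) : Bal {a | a ∈ l} := by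
  intro v
  obtain ⟨h, hc, hcl, hnd⟩ := hl
  have hrot := map_snd_rotate ⟨h, hc, hcl, hnd⟩
  have hnds : (l.map Prod.snd).Nodup := by rw [hrot]; exact List.nodup_rotate.mpr hnd
  have hsub1 : {a ∈ {a : V × V | a ∈ l} | a.1 = v}.Subsingleton := by
    intro a ha b hb
    exact List.inj_on_of_nodup_map hnd ha.1 hb.1 (ha.2.trans hb.2.symm)
  have hsub2 : {a ∈ {a : V × V | a ∈ l} | a.2 = v}.Subsingleton := by
    intro a ha b hb
    exact List.inj_on_of_nodup_map hnds ha.1 hb.1 (ha.2.trans hb.2.symm)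
  have hne : {a ∈ {a : V × V | a ∈ l} | a.1 = v}.Nonempty ↔
      {a ∈ {a : V × V | a ∈ l} | a.2 = v}.Nonempty := by
    constructor
    · rintro ⟨a, ha, hav⟩
      have : v ∈ l.map Prod.snd := by
        rw [hrot, List.mem_rotate]
        exact List.mem_map.mpr ⟨a, ha, hav⟩
      obtain ⟨b, hb, hbv⟩ := List.mem_map.mp this
      exact ⟨b, hb, hbv⟩
    · rintro ⟨a, ha, hav⟩
      have : v ∈ l.map Prod.fst := by
        rw [← List.mem_rotate (n := 1), ← hrot]
        exact List.mem_map.mpr ⟨a, ha, hav⟩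
      obtain ⟨b, hb, hbv⟩ := List.mem_map.mp this
      exact ⟨b, hb, hbv⟩
  rcases hsub1.eq_empty_or_singleton with h1 | ⟨x, h1⟩ <;>
    rcases hsub2.eq_empty_or_singleton with h2 | ⟨y, h2⟩ <;>
    simp only [h1, h2] at hne ⊢
  · exfalso; simpa using hne.mpr ⟨y, rfl⟩
  · exfalso; simpa using hne.mp ⟨x, rfl⟩
  · simp

lemma bal_diff [Fintype V] {S T : Set (V × V)} (hT : T ⊆ S) (hS : Bal S) (hTb : Bal T) :
    Bal (S \ T) := by
  intro v
  have e1 : {a ∈ S \ T | a.1 = v} = {a ∈ S | a.1 = v} \ {a ∈ T | a.1 = v} := by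
    ext a; simp only [Set.mem_diff, Set.mem_setOf_eq, Set.mem_sep_iff]; tauto
  have e2 : {a ∈ S \ T | a.2 = v} = {a ∈ S | a.2 = v} \ {a ∈ T | a.2 = v} := by
    ext a; simp only [Set.mem_diff, Set.mem_setOf_eq, Set.mem_sep_iff]; tauto
  have s1 : {a ∈ T | a.1 = v} ⊆ {a ∈ S | a.1 = v} := fun a ha => ⟨hT ha.1, ha.2⟩
  have s2 : {a ∈ T | a.2 = v} ⊆ {a ∈ S | a.2 = v} := fun a ha => ⟨hT ha.1, ha.2⟩
  rw [e1, e2, Set.ncard_diff s1 (Set.toFinite _), Set.ncard_diff s2 (Set.toFinite _),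
    hS v, hTb v]

lemma extend [Fintype V] {S : Set (V × V)} (hbal : Bal S) :
    ∀ (fuel : ℕ) (p : List (V × V)) (hp : p ≠ []),
      Fintype.card V < p.length + fuel →
      p.Chain' (fun a b => a.2 = b.1) → (∀ x ∈ p, x ∈ S) → (p.map Prod.fst).Nodup →
      ∃ l, IsCycList l ∧ ∀ x ∈ l, x ∈ S := by
  intro fuel
  induction fuel with
  | zero =>
    intro p hp hlen _ _ hnd
    exfalso
    have := hnd.length_le_card
    simp only [List.length_map] at this
    omega
  | succ fuel ih =>
    intro p hp hlen hc hmem hnd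
    set v := (p.getLast hp).2 with hv
    by_cases hvin : v ∈ p.map Prod.fst
    · -- extract a cycle as a suffix of p
      obtain ⟨a, ha, hav⟩ := List.mem_map.mp hvin
      obtain ⟨i, hi, hia⟩ := List.getElem_of_mem ha
      refine ⟨p.drop i, ⟨?_, ?_, ?_, ?_⟩, ?_⟩
      · rw [← List.length_pos_iff_ne_nil, List.length_drop]; omega
      · exact hc.drop i
      · have hlen' : (p.drop i).length = p.length - i := List.length_drop
        have hne : p.drop i ≠ [] := by rw [← List.length_pos_iff_ne_nil]; omega
        rw [List.getLast_eq_getElem hne, List.head_eq_getElem hne]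
        rw [List.getElem_drop, List.getElem_drop]
        have h1 : i + ((p.drop i).length - 1) = p.length - 1 := by omega
        have h2 : i + 0 = i := by omega
        simp only [h1, h2]
        rw [hia, hav, hv, List.getLast_eq_getElem hp]
      · rw [List.map_drop]
        exact List.Nodup.sublist (List.drop_sublist _ _) hnd
      · intro x hx
        exact hmem x (List.mem_of_mem_drop hx)
    · -- extend the path
      have hinne : ({a ∈ S | a.2 = v} : Set (V × V)).Nonempty :=
        ⟨p.getLast hp, hmem _ (List.getLast_mem hp), rfl⟩
      have houtne : ({a ∈ S | a.1 = v} : Set (V × V)).Nonempty := by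
        rw [← Set.ncard_pos (Set.toFinite _), hbal v, Set.ncard_pos (Set.toFinite _)]
        exact hinne
      obtain ⟨b, hbS, hbv⟩ := houtne
      refine ih (p ++ [b]) (by simp) (by simp; omega) ?_ ?_ ?_
      · unfold List.Chain'
        rw [List.isChain_append]
        refine ⟨hc, List.isChain_singleton _, ?_⟩
        intro x hx y hy
        rw [List.getLast?_eq_getLast_of_ne_nil hp, Option.mem_some_iff] at hx
        simp only [List.head?_cons, Option.mem_some_iff] at hy
        subst hx; subst hy; exact hbv.symm
      · intro x hx
        rcases List.mem_append.mp hx with h | h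
        · exact hmem x h
        · simp at h; subst h; exact hbS
      · rw [List.map_append]
        simp only [List.map_cons, List.map_nil]
        rw [List.nodup_append]
        refine ⟨hnd, List.nodup_singleton _, ?_⟩
        intro x hx y hy hxy
        simp only [List.mem_singleton] at hy
        exact hvin (by rwa [hxy, hy, hbv] at hx)

lemma exists_cyc [Fintype V] {S : Set (V × V)} (hbal : Bal S) {a : V × V} (ha : a ∈ S) :
    ∃ l, IsCycList l ∧ ∀ x ∈ l, x ∈ S := by
  refine extend hbal (Fintype.card V) [a] (by simp) (by simp) (List.isChain_singleton _)
    (by simpa using ha) (by simp)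

lemma decomp [Fintype V] : ∀ (n : ℕ) (S : Set (V × V)), S.ncard ≤ n → Bal S →
    ∃ (m : ℕ) (f : Fin m → Set (V × V)),
      (∀ i, IsCycleSet (f i)) ∧
      (∀ i j, i ≠ j → Disjoint (f i) (f j)) ∧
      (⋃ i, f i) = S := by
  intro n
  induction n with
  | zero =>
    intro S hS _
    have : S = ∅ := by
      rw [← Set.ncard_eq_zero (Set.toFinite _)]; omega
    exact ⟨0, Fin.elim0, fun i => i.elim0, fun i => i.elim0, by simp [this]⟩
  | succ n ih =>
    intro S hS hbal
    rcases Set.eq_empty_or_nonempty S with h | ⟨a, ha⟩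
    · exact ⟨0, Fin.elim0, fun i => i.elim0, fun i => i.elim0, by simp [h]⟩
    obtain ⟨l, hl, hlS⟩ := exists_cyc hbal ha
    set C0 : Set (V × V) := {x | x ∈ l} with hC0
    have hC0S : C0 ⊆ S := fun x hx => hlS x hx
    have hC0ne : C0.Nonempty := by
      obtain ⟨h, _⟩ := hl
      exact ⟨l.head h, List.head_mem h⟩
    have hC0bal : Bal C0 := cyc_bal hl
    have hbal' : Bal (S \ C0) := bal_diff hC0S hbal hC0bal
    have hcard : (S \ C0).ncard ≤ n := by
      rw [Set.ncard_diff hC0S (Set.toFinite _)]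
      have h1 : 0 < C0.ncard := (Set.ncard_pos (Set.toFinite _)).mpr hC0ne
      omega
    obtain ⟨m, f, hf1, hf2, hf3⟩ := ih (S \ C0) hcard hbal'
    refine ⟨m + 1, Fin.cons C0 f, ?_, ?_, ?_⟩
    · intro i
      refine Fin.cases ?_ ?_ i
      · exact ⟨l, hl, rfl⟩
      · intro j; simpa using hf1 j
    · intro i j hij
      have hfsub : ∀ k, f k ⊆ S \ C0 := fun k => hf3 ▸ Set.subset_iUnion f k
      rcases Fin.eq_zero_or_eq_succ i with rfl | ⟨i', rfl⟩ <;>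
        rcases Fin.eq_zero_or_eq_succ j with rfl | ⟨j', rfl⟩
      · exact absurd rfl hij
      · simp only [Fin.cons_zero, Fin.cons_succ]
        exact Set.disjoint_left.mpr fun x hx hx' => (hfsub j' hx').2 hx
      · simp only [Fin.cons_zero, Fin.cons_succ]
        exact Set.disjoint_left.mpr fun x hx hx' => (hfsub i' hx).2 hx'
      · simp only [Fin.cons_succ]
        exact hf2 i' j' (fun h => hij (congrArg Fin.succ h))
    · have huni : (⋃ i, Fin.cons (α := fun _ => Set (V × V)) C0 f i) = C0 ∪ ⋃ j, f j := by
        ext x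
        simp only [Set.mem_iUnion, Set.mem_union]
        constructor
        · rintro ⟨i, hi⟩
          rcases Fin.eq_zero_or_eq_succ i with rfl | ⟨j, rfl⟩
          · exact Or.inl (by simpa using hi)
          · exact Or.inr ⟨j, by simpa using hi⟩
        · rintro (h | ⟨j, hj⟩)
          · exact ⟨0, by simpa⟩
          · exact ⟨j.succ, by simpa⟩
      rw [huni, hf3, Set.union_diff_cancel hC0S]

lemma bal_delta [Fintype V] {C C' : Set (V × V)} (hC : IsCycleSet C) (hC' : IsCycleSet C')
    (hdisj : C ∩ C' = ∅) :
    Bal ({a ∈ C | Prod.swap a ∉ C'} ∪ {a ∈ C' | Prod.swap a ∉ C}) := by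
  have hbC : Bal C := by obtain ⟨l, hl, rfl⟩ := hC; exact cyc_bal hl
  have hbC' : Bal C' := by obtain ⟨l, hl, rfl⟩ := hC'; exact cyc_bal hl
  intro v
  set X : Set (V × V) := {a | a ∈ C ∧ a.1 = v ∧ Prod.swap a ∈ C'} with hX
  set Y : Set (V × V) := {a | a ∈ C' ∧ a.1 = v ∧ Prod.swap a ∈ C} with hY
  set X' : Set (V × V) := {a | a ∈ C ∧ a.2 = v ∧ Prod.swap a ∈ C'} with hX'
  set Y' : Set (V × V) := {a | a ∈ C' ∧ a.2 = v ∧ Prod.swap a ∈ C} with hY'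
  have himg1 : Y' = Prod.swap '' X := by
    ext a
    constructor
    · rintro ⟨h1, h2, h3⟩
      exact ⟨Prod.swap a, ⟨h3, h2, by simpa using h1⟩, by simp⟩
    · rintro ⟨b, ⟨h1, h2, h3⟩, rfl⟩
      exact ⟨h3, h2, by simpa using h1⟩
  have himg2 : X' = Prod.swap '' Y := by
    ext a
    constructor
    · rintro ⟨h1, h2, h3⟩
      exact ⟨Prod.swap a, ⟨h3, h2, by simpa using h1⟩, by simp⟩
    · rintro ⟨b, ⟨h1, h2, h3⟩, rfl⟩
      exact ⟨h3, h2, by simpa using h1⟩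
  have e1 : {a ∈ ({a ∈ C | Prod.swap a ∉ C'} ∪ {a ∈ C' | Prod.swap a ∉ C}) | a.1 = v} =
      ({a ∈ C | a.1 = v} \ X) ∪ ({a ∈ C' | a.1 = v} \ Y) := by
    ext a
    simp only [Set.mem_union, Set.mem_diff, Set.mem_setOf_eq, hX, hY]
    tauto
  have e2 : {a ∈ ({a ∈ C | Prod.swap a ∉ C'} ∪ {a ∈ C' | Prod.swap a ∉ C}) | a.2 = v} =
      ({a ∈ C | a.2 = v} \ X') ∪ ({a ∈ C' | a.2 = v} \ Y') := by
    ext a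
    simp only [Set.mem_union, Set.mem_diff, Set.mem_setOf_eq, hX', hY']
    tauto
  have hdisj' : ∀ a, a ∈ C → a ∈ C' → False := fun a h h' =>
    Set.eq_empty_iff_forall_notMem.mp hdisj a ⟨h, h'⟩
  have d1 : Disjoint ({a ∈ C | a.1 = v} \ X) ({a ∈ C' | a.1 = v} \ Y) :=
    Set.disjoint_left.mpr fun a ha hb => hdisj' a ha.1.1 hb.1.1
  have d2 : Disjoint ({a ∈ C | a.2 = v} \ X') ({a ∈ C' | a.2 = v} \ Y') :=
    Set.disjoint_left.mpr fun a ha hb => hdisj' a ha.1.1 hb.1.1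
  have sX : X ⊆ {a ∈ C | a.1 = v} := fun a ha => ⟨ha.1, ha.2.1⟩
  have sY : Y ⊆ {a ∈ C' | a.1 = v} := fun a ha => ⟨ha.1, ha.2.1⟩
  have sX' : X' ⊆ {a ∈ C | a.2 = v} := fun a ha => ⟨ha.1, ha.2.1⟩
  have sY' : Y' ⊆ {a ∈ C' | a.2 = v} := fun a ha => ⟨ha.1, ha.2.1⟩
  rw [e1, e2, Set.ncard_union_eq d1 (Set.toFinite _) (Set.toFinite _),
    Set.ncard_union_eq d2 (Set.toFinite _) (Set.toFinite _),
    Set.ncard_diff sX (Set.toFinite _), Set.ncard_diff sY (Set.toFinite _),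
    Set.ncard_diff sX' (Set.toFinite _), Set.ncard_diff sY' (Set.toFinite _)]
  have c1 := hbC v
  have c2 := hbC' v
  have i1 : Y'.ncard = X.ncard := by
    rw [himg1, Set.ncard_image_of_injective _ Prod.swap_injective]
  have i2 : X'.ncard = Y.ncard := by
    rw [himg2, Set.ncard_image_of_injective _ Prod.swap_injective]
  have le1 := Set.ncard_le_ncard sX (Set.toFinite _)
  have le2 := Set.ncard_le_ncard sY (Set.toFinite _)
  have le3 := Set.ncard_le_ncard sX' (Set.toFinite _)
  have le4 := Set.ncard_le_ncard sY' (Set.toFinite _)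
  omega

theorem statement17 [Fintype V] (D C C' : Set (V × V))
    (hCD : C ⊆ D) (hC'D : C' ⊆ D)
    (hC : IsCycleSet C) (hC' : IsCycleSet C') (hdisj : C ∩ C' = ∅) :
    ∃ (n : ℕ) (f : Fin n → Set (V × V)),
      (∀ i, IsCycleSet (f i)) ∧
      (∀ i j, i ≠ j → Disjoint (f i) (f j)) ∧
      (⋃ i, f i) = {a ∈ C | Prod.swap a ∉ C'} ∪ {a ∈ C' | Prod.swap a ∉ C} := by
  exact decomp _ _ le_rfl (bal_delta hC hC' hdisj)

end SubgraphsVsOrientations
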